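/- Let A and B be bounded linear operators on a complex Hilbert space H. Then ‖A + B‖ ≤ 2∫₀¹ ω([[O, (1−t)A + tB],[(1−t)B* + tA*, O]]) dt ≤ ‖A‖ + ‖B‖. -/

import Mathlib

open ContinuousLinearMap

/-- The numerical radius of a bounded operator on a complex inner product space:
`ω(T) = sup { |⟨Tx, x⟩| : ‖x‖ = 1 }`. -/
noncomputable def numRadius {E : Type*} [NormedAddCommGroup E] [InnerProductSpace ℂ E]
    (T : E →L[ℂ] E) : ℝ :=
  ⨆ x : { x : E // ‖x‖ = 1 }, ‖(inner ℂ (T x) (x : E) : ℂ)‖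

/-- The block operator `[[O, A], [B, O]]` on the Hilbert space direct sum `H ⊕₂ H`,
sending `(x, y)` to `(A y, B x)`. -/
noncomputable def blockOp {H : Type*} [NormedAddCommGroup H] [InnerProductSpace ℂ H]
    (A B : H →L[ℂ] H) : WithLp 2 (H × H) →L[ℂ] WithLp 2 (H × H) :=
  ((WithLp.prodContinuousLinearEquiv 2 ℂ H H).symm : (H × H) →L[ℂ] WithLp 2 (H × H)) ∘L
    ((A ∘L ContinuousLinearMap.snd ℂ H H).prod (B ∘L ContinuousLinearMap.fst ℂ H H)) ∘L
    ((WithLp.prodContinuousLinearEquiv 2 ℂ H H) : WithLp 2 (H × H) →L[ℂ] H × H)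

section Aux

variable {E : Type*} [NormedAddCommGroup E] [InnerProductSpace ℂ E]

lemma numRadius_bdd (T : E →L[ℂ] E) :
    BddAbove (Set.range fun x : { x : E // ‖x‖ = 1 } => ‖(inner ℂ (T x) (x : E) : ℂ)‖) := by
  refine ⟨‖T‖, ?_⟩
  rintro _ ⟨x, rfl⟩
  calc ‖(inner ℂ (T x) (x : E) : ℂ)‖ ≤ ‖T (x : E)‖ * ‖(x : E)‖ := norm_inner_le_norm _ _
    _ ≤ (‖T‖ * ‖(x : E)‖) * ‖(x : E)‖ := by gcongr; exact T.le_opNorm _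
    _ = ‖T‖ := by rw [x.2]; ring

lemma numRadius_nonneg (T : E →L[ℂ] E) : 0 ≤ numRadius T :=
  Real.iSup_nonneg fun _ => norm_nonneg _

lemma le_numRadius (T : E →L[ℂ] E) {x : E} (hx : ‖x‖ = 1) :
    ‖(inner ℂ (T x) x : ℂ)‖ ≤ numRadius T :=
  le_ciSup (numRadius_bdd T) (⟨x, hx⟩ : { x : E // ‖x‖ = 1 })

lemma numRadius_le {T : E →L[ℂ] E} {c : ℝ} (hc : 0 ≤ c)
    (h : ∀ x : E, ‖x‖ = 1 → ‖(inner ℂ (T x) x : ℂ)‖ ≤ c) : numRadius T ≤ c :=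
  Real.iSup_le (fun x => h x x.2) hc

lemma numRadius_le_add (S T : E →L[ℂ] E) : numRadius S ≤ numRadius T + ‖S - T‖ := by
  refine Real.iSup_le (fun x => ?_)
    (add_nonneg (numRadius_nonneg T) (norm_nonneg _))
  have hSx : S (x : E) = T (x : E) + (S - T) (x : E) := by simp
  calc ‖(inner ℂ (S x) (x : E) : ℂ)‖
      = ‖(inner ℂ (T x) (x : E) : ℂ) + (inner ℂ ((S - T) x) (x : E) : ℂ)‖ := by
        rw [hSx, inner_add_left]
    _ ≤ ‖(inner ℂ (T x) (x : E) : ℂ)‖ + ‖(inner ℂ ((S - T) x) (x : E) : ℂ)‖ := norm_add_le _ _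
    _ ≤ numRadius T + ‖S - T‖ := by
        refine add_le_add (le_numRadius T x.2) ?_
        calc ‖(inner ℂ ((S - T) x) (x : E) : ℂ)‖ ≤ ‖(S - T) (x : E)‖ * ‖(x : E)‖ :=
              norm_inner_le_norm _ _
          _ ≤ (‖S - T‖ * ‖(x : E)‖) * ‖(x : E)‖ := by gcongr; exact (S - T).le_opNorm _
          _ = ‖S - T‖ := by rw [x.2]; ring

lemma lipschitz_numRadius : LipschitzWith 1 (numRadius (E := E)) := by
  refine LipschitzWith.of_dist_le_mul fun S T => ?_
  rw [NNReal.coe_one, one_mul, dist_eq_norm, dist_eq_norm, Real.norm_eq_abs, abs_sub_le_iff]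
  constructor
  · have := numRadius_le_add S T
    linarith
  · have := numRadius_le_add T S
    rw [norm_sub_rev] at this
    linarith

end Aux

section Block

variable {H : Type*} [NormedAddCommGroup H] [InnerProductSpace ℂ H] [CompleteSpace H]

set_option linter.unusedSectionVars false

lemma blockOp_inner (A B : H →L[ℂ] H) (z : WithLp 2 (H × H)) :
    (inner ℂ (blockOp A B z) z : ℂ) = inner ℂ (A z.snd) z.fst + inner ℂ (B z.fst) z.snd := rfl

lemma numRadius_blockOp_le (A B : H →L[ℂ] H) :
    numRadius (blockOp A B) ≤ (‖A‖ + ‖B‖) / 2 := by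
  refine numRadius_le (by positivity) fun z hz => ?_
  have hn : ‖z.fst‖ ^ 2 + ‖z.snd‖ ^ 2 = 1 := by
    rw [← WithLp.prod_norm_sq_eq_of_L2, hz]; norm_num
  rw [blockOp_inner]
  calc ‖(inner ℂ (A z.snd) z.fst : ℂ) + (inner ℂ (B z.fst) z.snd : ℂ)‖
      ≤ ‖(inner ℂ (A z.snd) z.fst : ℂ)‖ + ‖(inner ℂ (B z.fst) z.snd : ℂ)‖ := norm_add_le _ _
    _ ≤ ‖A z.snd‖ * ‖z.fst‖ + ‖B z.fst‖ * ‖z.snd‖ :=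
        add_le_add (norm_inner_le_norm _ _) (norm_inner_le_norm _ _)
    _ ≤ (‖A‖ * ‖z.snd‖) * ‖z.fst‖ + (‖B‖ * ‖z.fst‖) * ‖z.snd‖ := by
        gcongr <;> exact le_opNorm _ _
    _ ≤ (‖A‖ + ‖B‖) / 2 := by
        nlinarith [norm_nonneg z.fst, norm_nonneg z.snd, norm_nonneg A, norm_nonneg B,
          sq_nonneg (‖z.fst‖ - ‖z.snd‖), mul_nonneg (norm_nonneg A) (sq_nonneg (‖z.fst‖ - ‖z.snd‖)),
          mul_nonneg (norm_nonneg B) (sq_nonneg (‖z.fst‖ - ‖z.snd‖))]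

lemma re_le_two_numRadius (A B : H →L[ℂ] H) {x y : H} (hx : ‖x‖ = 1) (hy : ‖y‖ = 1) :
    ((inner ℂ (A y) x : ℂ) + inner ℂ (B x) y).re ≤ 2 * numRadius (blockOp A B) := by
  set c : ℝ := (Real.sqrt 2)⁻¹ with hc
  have hcpos : (0 : ℝ) < c := by
    rw [hc]; positivity
  have hc2 : c * c = 2⁻¹ := by
    rw [hc, ← mul_inv, Real.mul_self_sqrt (by norm_num : (0:ℝ) ≤ 2)]
  set z : WithLp 2 (H × H) := (WithLp.equiv 2 (H × H)).symm ((c : ℂ) • x, (c : ℂ) • y) with hz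
  have hz1 : z.fst = (c : ℂ) • x := rfl
  have hz2 : z.snd = (c : ℂ) • y := rfl
  have hzu : ‖z‖ = 1 := by
    have h := WithLp.prod_norm_sq_eq_of_L2 z
    rw [hz1, hz2, norm_smul, norm_smul, hx, hy, Complex.norm_real, Real.norm_eq_abs,
      abs_of_pos hcpos] at h
    have h1 : ‖z‖ ^ 2 = 1 := by rw [h]; nlinarith [hc2]
    rw [← Real.sqrt_sq (norm_nonneg z), h1, Real.sqrt_one]
  have hrew : (inner ℂ (blockOp A B z) z : ℂ)
      = (Complex.ofReal 2⁻¹) * ((inner ℂ (A y) x : ℂ) + inner ℂ (B x) y) := by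
    have h2 : ((c : ℂ)) * ((c : ℂ)) = Complex.ofReal 2⁻¹ := by
      rw [← Complex.ofReal_mul, hc2]
    rw [blockOp_inner, hz1, hz2, map_smul, map_smul, inner_smul_left, inner_smul_left,
      inner_smul_right, inner_smul_right, Complex.conj_ofReal]
    linear_combination ((inner ℂ (A y) x : ℂ) + inner ℂ (B x) y) * h2
  calc ((inner ℂ (A y) x : ℂ) + inner ℂ (B x) y).re
      = 2 * ((inner ℂ (blockOp A B z) z : ℂ)).re := by
        rw [hrew, Complex.re_ofReal_mul]; ring
    _ ≤ 2 * ‖(inner ℂ (blockOp A B z) z : ℂ)‖ := by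
        have := Complex.re_le_norm (inner ℂ (blockOp A B z) z : ℂ)
        linarith
    _ ≤ 2 * numRadius (blockOp A B) := by
        have := le_numRadius (blockOp A B) hzu
        linarith

lemma norm_le_two_numRadius (A B : H →L[ℂ] H) :
    ‖A + adjoint B‖ ≤ 2 * numRadius (blockOp A B) := by
  have hω : 0 ≤ numRadius (blockOp A B) := numRadius_nonneg _
  refine opNorm_le_bound _ (by linarith) fun y => ?_
  rcases eq_or_ne ((A + adjoint B) y) 0 with h0 | h0
  · rw [h0, norm_zero]; positivity
  have hy : y ≠ 0 := by
    rintro rfl; exact h0 (map_zero _)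
  have hCy : (0 : ℝ) < ‖(A + adjoint B) y‖ := norm_pos_iff.mpr h0
  have hyn : (0 : ℝ) < ‖y‖ := norm_pos_iff.mpr hy
  have hxu : ‖(‖(A + adjoint B) y‖⁻¹ : ℝ) • (A + adjoint B) y‖ = 1 := by
    rw [norm_smul, Real.norm_eq_abs, abs_of_pos (inv_pos.mpr hCy), inv_mul_cancel₀ hCy.ne']
  have hyu : ‖(‖y‖⁻¹ : ℝ) • y‖ = 1 := by
    rw [norm_smul, Real.norm_eq_abs, abs_of_pos (inv_pos.mpr hyn), inv_mul_cancel₀ hyn.ne']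
  have hkey := re_le_two_numRadius A B hxu hyu
  have hsum : (inner ℂ (A ((‖y‖⁻¹ : ℝ) • y)) ((‖(A + adjoint B) y‖⁻¹ : ℝ) • (A + adjoint B) y) : ℂ)
        + inner ℂ (B ((‖(A + adjoint B) y‖⁻¹ : ℝ) • (A + adjoint B) y)) ((‖y‖⁻¹ : ℝ) • y)
      = ((‖y‖⁻¹ * ‖(A + adjoint B) y‖⁻¹ : ℝ) : ℂ)
        * ((inner ℂ (A y) ((A + adjoint B) y) : ℂ) + inner ℂ (B ((A + adjoint B) y)) y) := by
    have hsmul : ∀ (r : ℝ) (v : H), r • v = ((r : ℂ)) • v := fun r v => by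
      rw [← Complex.coe_algebraMap, algebraMap_smul]
    rw [hsmul, hsmul]
    simp only [map_smul, inner_smul_left, inner_smul_right, Complex.conj_ofReal]
    push_cast
    ring
  have hre : ((inner ℂ (A y) ((A + adjoint B) y) : ℂ) + inner ℂ (B ((A + adjoint B) y)) y).re
      = ‖(A + adjoint B) y‖ ^ 2 := by
    have h1 : (inner ℂ (B ((A + adjoint B) y)) y : ℂ)
        = starRingEnd ℂ (inner ℂ (adjoint B y) ((A + adjoint B) y) : ℂ) := by
      rw [← inner_conj_symm, adjoint_inner_left]
    have h2 : (inner ℂ (A y) ((A + adjoint B) y) : ℂ)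
          + (inner ℂ (adjoint B y) ((A + adjoint B) y) : ℂ)
        = inner ℂ ((A + adjoint B) y) ((A + adjoint B) y) := by
      rw [← inner_add_left]; rfl
    rw [h1, Complex.add_re, Complex.conj_re, ← Complex.add_re, h2,
      inner_self_eq_norm_sq_to_K]
    norm_cast
  have hlhs : ((inner ℂ (A ((‖y‖⁻¹ : ℝ) • y)) ((‖(A + adjoint B) y‖⁻¹ : ℝ) • (A + adjoint B) y) : ℂ)
        + inner ℂ (B ((‖(A + adjoint B) y‖⁻¹ : ℝ) • (A + adjoint B) y)) ((‖y‖⁻¹ : ℝ) • y)).re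
      = ‖(A + adjoint B) y‖ / ‖y‖ := by
    rw [hsum, Complex.re_ofReal_mul, hre]
    have key : ∀ a b : ℝ, 0 < a → 0 < b → b⁻¹ * a⁻¹ * a ^ 2 = a / b := by
      intro a b ha hb; field_simp
    exact key _ _ hCy hyn
  rw [hlhs, div_le_iff₀ hyn] at hkey
  exact hkey

end Block

/-- `‖A+B‖ ≤ 2∫₀¹ ω([[O,(1−t)A+tB],[(1−t)B*+tA*,O]]) dt ≤ ‖A‖+‖B‖`. -/
theorem stmt_14 {H : Type*} [NormedAddCommGroup H] [InnerProductSpace ℂ H] [CompleteSpace H]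
    (A B : H →L[ℂ] H) :
    ‖A + B‖ ≤
        2 * ∫ t in (0:ℝ)..1,
          numRadius
            (blockOp (((1 - t : ℝ) : ℂ) • A + ((t : ℝ) : ℂ) • B)
              (((1 - t : ℝ) : ℂ) • adjoint B + ((t : ℝ) : ℂ) • adjoint A)) ∧
      ((2 : ℝ) * ∫ t in (0:ℝ)..1,
          numRadius
            (blockOp (((1 - t : ℝ) : ℂ) • A + ((t : ℝ) : ℂ) • B)
              (((1 - t : ℝ) : ℂ) • adjoint B + ((t : ℝ) : ℂ) • adjoint A))) ≤
        ‖A‖ + ‖B‖ := by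
  set X : ℝ → (H →L[ℂ] H) := fun t => ((1 - t : ℝ) : ℂ) • A + ((t : ℝ) : ℂ) • B with hX
  set Y : ℝ → (H →L[ℂ] H) :=
    fun t => ((1 - t : ℝ) : ℂ) • adjoint B + ((t : ℝ) : ℂ) • adjoint A with hY
  set g : ℝ → ℝ := fun t => numRadius (blockOp (X t) (Y t)) with hg
  -- the adjoint identity : X t + adjoint (Y t) = A + B
  have hXY : ∀ t : ℝ, X t + adjoint (Y t) = A + B := by
    intro t
    rw [hX, hY]
    simp only
    rw [map_add adjoint, adjoint.map_smulₛₗ, adjoint.map_smulₛₗ, adjoint_adjoint,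
      adjoint_adjoint, Complex.conj_ofReal, Complex.conj_ofReal]
    push_cast
    module
  -- lower bound pointwise
  have hlow : ∀ t : ℝ, ‖A + B‖ ≤ 2 * g t := by
    intro t
    have := norm_le_two_numRadius (X t) (Y t)
    rw [hXY t] at this
    exact this
  -- upper bound pointwise on [0,1]
  have hup : ∀ t ∈ Set.Icc (0:ℝ) 1, g t ≤ (‖A‖ + ‖B‖) / 2 := by
    intro t ht
    refine (numRadius_blockOp_le (X t) (Y t)).trans ?_
    have hXn : ‖X t‖ ≤ (1 - t) * ‖A‖ + t * ‖B‖ := by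
      calc ‖X t‖ ≤ ‖((1 - t : ℝ) : ℂ) • A‖ + ‖((t : ℝ) : ℂ) • B‖ := norm_add_le _ _
        _ = |1 - t| * ‖A‖ + |t| * ‖B‖ := by
            rw [norm_smul, norm_smul, Complex.norm_real, Complex.norm_real,
              Real.norm_eq_abs, Real.norm_eq_abs]
        _ = (1 - t) * ‖A‖ + t * ‖B‖ := by
            rw [abs_of_nonneg (by linarith [ht.2] : (0:ℝ) ≤ 1 - t), abs_of_nonneg ht.1]
    have hYn : ‖Y t‖ ≤ (1 - t) * ‖B‖ + t * ‖A‖ := by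
      calc ‖Y t‖ ≤ ‖((1 - t : ℝ) : ℂ) • adjoint B‖ + ‖((t : ℝ) : ℂ) • adjoint A‖ :=
            norm_add_le _ _
        _ = |1 - t| * ‖B‖ + |t| * ‖A‖ := by
            rw [norm_smul, norm_smul, Complex.norm_real, Complex.norm_real,
              Real.norm_eq_abs, Real.norm_eq_abs, adjoint.norm_map, adjoint.norm_map]
        _ = (1 - t) * ‖B‖ + t * ‖A‖ := by
            rw [abs_of_nonneg (by linarith [ht.2] : (0:ℝ) ≤ 1 - t), abs_of_nonneg ht.1]
    have : ‖X t‖ + ‖Y t‖ ≤ ‖A‖ + ‖B‖ := by nlinarith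
    linarith
  -- continuity and integrability of g
  have hFt : ∀ t : ℝ, blockOp (X t) (Y t)
      = (1 - (t : ℂ)) • blockOp A (adjoint B) + (t : ℂ) • blockOp B (adjoint A) := by
    intro t
    have h1 : X t = (1 - (t : ℂ)) • A + (t : ℂ) • B := by
      rw [hX]; push_cast; ring_nf
    have h2 : Y t = (1 - (t : ℂ)) • adjoint B + (t : ℂ) • adjoint A := by
      rw [hY]; push_cast; ring_nf
    rw [h1, h2]
    rfl
  have hgc : Continuous g := by
    have h1 : Continuous fun t : ℝ =>
        (1 - (t : ℂ)) • blockOp A (adjoint B) + (t : ℂ) • blockOp B (adjoint A) := by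
      fun_prop
    have h2 : Continuous fun t : ℝ => blockOp (X t) (Y t) := by
      simp_rw [hFt]; exact h1
    exact lipschitz_numRadius.continuous.comp h2
  have hgi : IntervalIntegrable g MeasureTheory.volume 0 1 :=
    hgc.intervalIntegrable 0 1
  have hgi2 : IntervalIntegrable (fun t => 2 * g t) MeasureTheory.volume 0 1 :=
    (continuous_const.mul hgc).intervalIntegrable 0 1
  constructor
  · calc ‖A + B‖ = ∫ _ in (0:ℝ)..1, ‖A + B‖ := by simp
      _ ≤ ∫ t in (0:ℝ)..1, 2 * g t := by
          refine intervalIntegral.integral_mono_on zero_le_one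
            (intervalIntegrable_const) hgi2 (fun t _ => hlow t)
      _ = 2 * ∫ t in (0:ℝ)..1, g t := intervalIntegral.integral_const_mul 2 g
  · have : (∫ t in (0:ℝ)..1, g t) ≤ (‖A‖ + ‖B‖) / 2 := by
      calc (∫ t in (0:ℝ)..1, g t) ≤ ∫ _ in (0:ℝ)..1, (‖A‖ + ‖B‖) / 2 :=
            intervalIntegral.integral_mono_on zero_le_one hgi intervalIntegrable_const hup
        _ = (‖A‖ + ‖B‖) / 2 := by simp
    linarith
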